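/- Let m ≥ 1, h = gcd(m, n), m' = m/h, and let A ⊆ O be a semi-module. Then for each 1 ≤ k ≤ h, the sum of φ_A(b) over all b ∈ Ā^k = Ā ∩ O^k equals m'. -/

import Mathlib

/-- The set `O = (ℤ/dℤ) × ℤ`; shift the second coordinate by `k`. -/
def shiftO (d : ℕ) (a : ZMod d × ℤ) (k : ℤ) : ZMod d × ℤ := (a.1, a.2 + k)

/-- The map `f : O → O`, `f(τ, i) = (τ-1, i+m)` if `τ = 1`, else `(τ-1, i)`. -/
def fO (d m : ℕ) (a : ZMod d × ℤ) : ZMod d × ℤ :=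
  if a.1 = 1 then (a.1 - 1, a.2 + (m : ℤ)) else (a.1 - 1, a.2)

/-- `A ⊆ O` is a semi-module: bounded below in each component, `A + n ⊆ A`,
`f(A) ⊆ A`, and `O = A + nℤ`. -/
def IsSemiModule (d n m : ℕ) (A : Set (ZMod d × ℤ)) : Prop :=
  (∀ τ : ZMod d, ∃ N : ℤ, ∀ i : ℤ, (τ, i) ∈ A → N ≤ i) ∧
  (∀ a ∈ A, shiftO d a (n : ℤ) ∈ A) ∧
  (∀ a ∈ A, fO d m a ∈ A) ∧
  (∀ x : ZMod d × ℤ, ∃ a ∈ A, ∃ k : ℤ, x = shiftO d a (k * (n : ℤ)))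

/-- `Ā = A \ (A + n)`. -/
def Abar (d n : ℕ) (A : Set (ZMod d × ℤ)) : Set (ZMod d × ℤ) :=
  A \ ((fun a => shiftO d a (n : ℤ)) '' A)

/-- `O^k = {(τ, i) : i ≡ k (mod h)}` where `h = gcd(m, n)`. -/
def Omod (d h : ℕ) (k : ℤ) : Set (ZMod d × ℤ) := {a | (h : ℤ) ∣ (a.2 - k)}


section aux
variable {d n m : ℕ} {A : Set (ZMod d × ℤ)}

lemma shift_mem (hA : IsSemiModule d n m A) {τ : ZMod d} {i : ℤ} (h : (τ, i) ∈ A) (t : ℕ) :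
    (τ, i + t * n) ∈ A := by
  induction t with
  | zero => simpa using h
  | succ t ih =>
      have := hA.2.1 _ ih
      simp only [shiftO] at this
      convert this using 2
      push_cast; ring

lemma abar_unique (hA : IsSemiModule d n m A) (hn : 1 ≤ n) {τ : ZMod d} {i i' : ℤ}
    (h : (τ, i) ∈ Abar d n A) (h' : (τ, i') ∈ Abar d n A) (hdvd : (n:ℤ) ∣ (i' - i)) :
    i = i' := by
  have key : ∀ j j' : ℤ, (τ, j) ∈ Abar d n A → (τ, j') ∈ Abar d n A →
      (n:ℤ) ∣ (j' - j) → j < j' → False := by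
    intro j j' hj hj' ⟨c, hc⟩ hlt
    have hc1 : 1 ≤ c := by
      rcases lt_or_ge c 1 with h1 | h1
      · exfalso; nlinarith [hc, Int.natCast_pos.mpr (show 0 < n by omega)]
      · exact h1
    have hmem : (τ, j + ((c - 1).toNat : ℤ) * n) ∈ A := shift_mem hA hj.1 _
    have htn : ((c - 1).toNat : ℤ) = c - 1 := Int.toNat_of_nonneg (by omega)
    rw [htn] at hmem
    refine hj'.2 ⟨(τ, j + (c - 1) * n), hmem, ?_⟩
    simp only [shiftO, Prod.mk.injEq]
    refine ⟨trivial, by nlinarith [hc]⟩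
  rcases lt_trichotomy i i' with hlt | heq | hlt
  · exact absurd hlt (fun hl => key _ _ h h' hdvd hl)
  · exact heq
  · exact absurd hlt (fun hl => key _ _ h' h (dvd_sub_comm.mp hdvd) hl)

end aux

section aux2
variable {d n m : ℕ} {A : Set (ZMod d × ℤ)}

lemma abar_exists (hA : IsSemiModule d n m A) (hn : 1 ≤ n) (τ : ZMod d) (r : ℤ) :
    ∃ i, (τ, i) ∈ Abar d n A ∧ (n:ℤ) ∣ (i - r) := by
  classical
  set P : ℤ → Prop := fun z => (τ, z) ∈ A ∧ (n:ℤ) ∣ (z - r) with hP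
  obtain ⟨N, hN⟩ := hA.1 τ
  have hbdd : ∃ b : ℤ, ∀ z : ℤ, P z → b ≤ z := ⟨N, fun z hz => hN z hz.1⟩
  have hinh : ∃ z, P z := by
    obtain ⟨⟨a1, a2⟩, ha, c, hc⟩ := hA.2.2.2 (τ, r)
    simp only [shiftO, Prod.ext_iff] at hc
    refine ⟨a2, ?_, ⟨-c, by rw [hc.2]; ring⟩⟩
    rwa [← hc.1] at ha
  obtain ⟨lb, hlb, hmin⟩ := Int.exists_least_of_bdd hbdd hinh
  refine ⟨lb, ⟨hlb.1, ?_⟩, hlb.2⟩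
  rintro ⟨⟨a1, a2⟩, ha, hae⟩
  simp only [shiftO, Prod.ext_iff] at hae
  obtain ⟨c, hc⟩ := hlb.2
  have haP : P (lb - (n:ℤ)) := by
    refine ⟨?_, ⟨c - 1, by rw [mul_sub]; omega⟩⟩
    have h2 : a2 = lb - (n:ℤ) := by omega
    rw [← hae.1, ← h2]; exact ha
  have := hmin _ haP
  have : (0:ℤ) < n := by exact_mod_cast hn
  omega

end aux2


/-- For `1 ≤ k ≤ h = gcd(m, n)`, the sum of `φ_A b` over `b ∈ Ā^k` equals `m' = m/h`. -/
theorem stmt17 (d n m : ℕ) (hd : 1 ≤ d) (hn : 1 ≤ n) (hm : 1 ≤ m)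
    (A : Set (ZMod d × ℤ)) (hA : IsSemiModule d n m A)
    (φ : ZMod d × ℤ → ℤ)
    (hφ : ∀ a ∈ A, shiftO d (fO d m a) (-(φ a * (n : ℤ))) ∈ Abar d n A) :
    ∀ k : ℕ, 1 ≤ k → k ≤ Nat.gcd m n →
      ∑ᶠ b ∈ Abar d n A ∩ Omod d (Nat.gcd m n) (k : ℤ), φ b
        = ((m / Nat.gcd m n : ℕ) : ℤ) := by
  intro k hk1 hk2
  classical
  haveI : NeZero d := ⟨by omega⟩
  set h := Nat.gcd m n with hh
  have hh0 : 0 < h := Nat.gcd_pos_of_pos_left n hm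
  have hhn : h ∣ n := Nat.gcd_dvd_right m n
  have hhm : h ∣ m := Nat.gcd_dvd_left m n
  set q := n / h with hq
  set mh := m / h with hmh
  have hnq : n = h * q := (Nat.mul_div_cancel' hhn).symm
  have hmq : m = h * mh := (Nat.mul_div_cancel' hhm).symm
  have hq0 : 0 < q := Nat.div_pos (Nat.le_of_dvd (by omega) hhn) hh0
  choose ψ hψ1 hψ2 using abar_exists hA hn
  set F : ZMod d × ℕ → ZMod d × ℤ := fun p => (p.1, ψ p.1 ((k:ℤ) + p.2 * h)) with hF
  set S : Finset (ZMod d × ℤ) := (Finset.univ ×ˢ Finset.range q).image F with hS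
  have hFinj : ∀ p ∈ Finset.univ ×ˢ Finset.range q, ∀ p' ∈ Finset.univ ×ˢ Finset.range q,
      F p = F p' → p = p' := by
    rintro ⟨τ, j⟩ hj ⟨τ', j'⟩ hj' he
    simp only [Finset.mem_product, Finset.mem_univ, Finset.mem_range, true_and] at hj hj'
    simp only [hF, Prod.ext_iff] at he
    obtain ⟨rfl, he2⟩ := he
    have d1 := hψ2 τ ((k:ℤ) + j * h)
    have d2 := hψ2 τ ((k:ℤ) + j' * h)
    rw [he2] at d1
    have d3 : (n:ℤ) ∣ ((j':ℤ) - j) * h := by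
      have := dvd_sub d1 d2
      have e : (ψ τ ((k:ℤ) + j' * h) - ((k:ℤ) + j * h)) -
          (ψ τ ((k:ℤ) + j' * h) - ((k:ℤ) + j' * h)) = ((j':ℤ) - j) * h := by ring
      rwa [e] at this
    have d4 : (q:ℤ) ∣ ((j':ℤ) - j) := by
      have hne : ((h:ℕ):ℤ) ≠ 0 := by exact_mod_cast hh0.ne'
      have : ((q:ℤ) * h) ∣ ((j':ℤ) - j) * h := by
        have e : ((q:ℤ) * h) = (n:ℤ) := by rw [hnq]; push_cast; ring
        rwa [e]
      exact (mul_dvd_mul_iff_right hne).mp this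
    have : ((j':ℤ) - j) = 0 := Int.eq_zero_of_abs_lt_dvd d4 (by
      rw [abs_lt]; constructor <;> [omega; omega])
    have : j = j' := by omega
    simp [this]
  have hFbar : ∀ p : ZMod d × ℕ, F p ∈ Abar d n A := fun p => hψ1 _ _
  have hSset : Abar d n A ∩ Omod d h (k:ℤ) = ↑S := by
    ext b
    constructor
    · rintro ⟨hb1, hb2⟩
      obtain ⟨t, ht⟩ := hb2
      set j : ℕ := (t % q).toNat with hj
      have hjq : j < q := by
        have h1 : t % q < q := Int.emod_lt_of_pos t (by exact_mod_cast hq0)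
        have h2 : 0 ≤ t % q := Int.emod_nonneg t (by exact_mod_cast hq0.ne')
        omega
      have hqd : (q:ℤ) ∣ (t - j) := by
        have : (j:ℤ) = t % q := Int.toNat_of_nonneg (Int.emod_nonneg t (by exact_mod_cast hq0.ne'))
        rw [this]
        exact Int.dvd_self_sub_of_emod_eq rfl
      have hnd : (n:ℤ) ∣ (b.2 - ((k:ℤ) + j * h)) := by
        obtain ⟨u, hu⟩ := hqd
        have e : b.2 - ((k:ℤ) + j * h) = (h * t) - j * h := by omega
        refine ⟨u, ?_⟩
        rw [e]
        have en : (n:ℤ) = h * q := by rw [hnq]; push_cast; ring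
        rw [en]
        have : (h:ℤ) * t - j * h = h * (t - j) := by ring
        rw [this, hu]; ring
      have heq : ψ b.1 ((k:ℤ) + j * h) = b.2 := by
        refine abar_unique hA hn (hψ1 b.1 _) ?_ ?_
        · rw [Prod.mk.eta]; exact hb1
        · have := hψ2 b.1 ((k:ℤ) + j * h)
          obtain ⟨u1, hu1⟩ := this
          obtain ⟨u2, hu2⟩ := hnd
          exact ⟨u2 - u1, by linear_combination hu2 - hu1⟩
      simp only [Finset.coe_image, Set.mem_image, hS]
      refine ⟨(b.1, j), ?_, ?_⟩
      · simp [Finset.mem_coe, Finset.mem_product, hjq]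
      · simp only [hF]; rw [heq]
    · intro hb
      simp only [hS, Finset.coe_image, Set.mem_image] at hb
      obtain ⟨p, hp, rfl⟩ := hb
      refine ⟨hFbar p, ?_⟩
      have := hψ2 p.1 ((k:ℤ) + p.2 * h)
      obtain ⟨u, hu⟩ := this
      have hhd : (h:ℤ) ∣ (n:ℤ) := by exact_mod_cast Int.natCast_dvd_natCast.mpr hhn
      obtain ⟨v, hv⟩ := hhd
      refine ⟨v * u + p.2, ?_⟩
      simp only [hF, Omod]
      have : ψ p.1 ((k:ℤ) + p.2 * h) - k = (ψ p.1 ((k:ℤ) + p.2 * h) - ((k:ℤ) + p.2 * h)) + p.2 * h := by ring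
      rw [this, hu, hv]; ring
  rw [hSset, finsum_mem_coe_finset]
  -- the map g
  set g : ZMod d × ℤ → ZMod d × ℤ := fun b => shiftO d (fO d m b) (-(φ b * (n:ℤ))) with hg
  have hg1 : ∀ b : ZMod d × ℤ, (g b).1 = b.1 - 1 := by
    intro b; simp only [hg, shiftO, fO]; split <;> rfl
  have hg2 : ∀ b : ZMod d × ℤ, (g b).2 = b.2 + (if b.1 = 1 then (m:ℤ) else 0) - φ b * n := by
    intro b; simp only [hg, shiftO, fO]; split <;> simp <;> ring
  have hgS : ∀ b ∈ S, g b ∈ S := by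
    intro b hb
    have hb' : b ∈ Abar d n A ∩ Omod d h (k:ℤ) := by rw [hSset]; exact hb
    have hbar : g b ∈ Abar d n A := hφ b hb'.1.1
    have homod : g b ∈ Omod d h (k:ℤ) := by
      obtain ⟨u, hu⟩ := hb'.2
      have hm' : (h:ℤ) ∣ (m:ℤ) := by exact_mod_cast Int.natCast_dvd_natCast.mpr hhm
      have hn' : (h:ℤ) ∣ (n:ℤ) := by exact_mod_cast Int.natCast_dvd_natCast.mpr hhn
      obtain ⟨v, hv⟩ := hm'
      obtain ⟨w, hw⟩ := hn'
      show (h:ℤ) ∣ ((g b).2 - k)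
      rw [hg2 b]
      by_cases h1 : b.1 = 1
      · simp only [h1, if_pos]
        refine ⟨u + v - φ b * w, ?_⟩
        rw [show b.2 + (m:ℤ) - φ b * n - k = (b.2 - k) + (m:ℤ) - φ b * (n:ℤ) by ring, hu, hv, hw]
        ring
      · simp only [h1, if_neg, not_false_iff]
        refine ⟨u - φ b * w, ?_⟩
        rw [show b.2 + 0 - φ b * n - k = (b.2 - k) - φ b * (n:ℤ) by ring, hu, hw]
        ring
    have : g b ∈ Abar d n A ∩ Omod d h (k:ℤ) := ⟨hbar, homod⟩
    rw [hSset] at this; exact this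
  have hginj : ∀ b ∈ S, ∀ b' ∈ S, g b = g b' → b = b' := by
    intro b hb b' hb' he
    have hb1 : b ∈ Abar d n A := by
      have : b ∈ Abar d n A ∩ Omod d h (k:ℤ) := by rw [hSset]; exact hb
      exact this.1
    have hb1' : b' ∈ Abar d n A := by
      have : b' ∈ Abar d n A ∩ Omod d h (k:ℤ) := by rw [hSset]; exact hb'
      exact this.1
    have e1 : b.1 = b'.1 := by
      have := congrArg Prod.fst he
      rw [hg1, hg1] at this
      exact sub_left_injective this
    have e2 : (n:ℤ) ∣ (b'.2 - b.2) := by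
      have := congrArg Prod.snd he
      rw [hg2, hg2, e1] at this
      exact ⟨φ b' - φ b, by linear_combination -this⟩
    have e3 : b.2 = b'.2 := by
      refine abar_unique (τ := b.1) hA hn ?_ ?_ e2
      · rw [Prod.mk.eta]; exact hb1
      · rw [e1, Prod.mk.eta]; exact hb1'
    exact Prod.ext e1 e3
  have himg : S.image g = S := by
    apply Finset.eq_of_subset_of_card_le
    · intro c hc
      obtain ⟨b, hb, rfl⟩ := Finset.mem_image.mp hc
      exact hgS b hb
    · rw [Finset.card_image_of_injOn (fun b hb b' hb' => hginj b hb b' hb')]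
  have hsum : ∑ b ∈ S, (g b).2 = ∑ b ∈ S, b.2 := by
    rw [← Finset.sum_image hginj, himg]
  have e1 : ∑ b ∈ S, (g b).2 = ∑ b ∈ S, b.2 +
      (∑ b ∈ S, ((if b.1 = 1 then (m:ℤ) else 0) - φ b * n)) := by
    rw [← Finset.sum_add_distrib]
    exact Finset.sum_congr rfl (fun b _ => by rw [hg2 b]; ring)
  have key : ∑ b ∈ S, ((if b.1 = 1 then (m:ℤ) else 0) - φ b * n) = 0 := by
    rw [e1] at hsum; omega
  have csum : ∑ b ∈ S, (if b.1 = 1 then (m:ℤ) else 0) = q * m := by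
    rw [hS, Finset.sum_image hFinj, Finset.sum_product]
    have inner : ∀ x : ZMod d, (∑ y ∈ Finset.range q, if (F (x, y)).1 = 1 then (m:ℤ) else 0)
        = (if x = 1 then (q:ℤ) * m else 0) := by
      intro x
      have e0 : ∀ y : ℕ, (if (F (x, y)).1 = 1 then (m:ℤ) else 0)
          = (if x = 1 then (m:ℤ) else 0) := fun y => rfl
      rw [Finset.sum_congr rfl (fun y _ => e0 y), Finset.sum_const, Finset.card_range]
      split <;> simp [mul_comm]
    rw [Finset.sum_congr rfl (fun x _ => inner x)]
    simp
  have ksum : (∑ b ∈ S, φ b) * (n:ℤ) = (q:ℤ) * m := by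
    have hd2 : ∑ b ∈ S, ((if b.1 = 1 then (m:ℤ) else 0) - φ b * n)
        = (∑ b ∈ S, (if b.1 = 1 then (m:ℤ) else 0)) - ∑ b ∈ S, φ b * n :=
      Finset.sum_sub_distrib _ _
    rw [hd2, csum] at key
    rw [Finset.sum_mul]
    omega
  have en : ((n:ℕ):ℤ) = (h:ℤ) * q := by exact_mod_cast hnq
  have em : ((m:ℕ):ℤ) = (h:ℤ) * mh := by exact_mod_cast hmq
  have final : (∑ b ∈ S, φ b) * (n:ℤ) = (mh:ℤ) * n := by
    rw [ksum, en, em]; ring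
  exact mul_right_cancel₀ (show ((n:ℕ):ℤ) ≠ 0 from Int.natCast_ne_zero.mpr (by omega)) final
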